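/- Let N ≥ 1 be an integer and m ∈ ℤ. Let A, B ∈ ℂ[X] be nonzero coprime polynomials such that for every ζ ∈ ℂ with ζ^N = 1 the polynomial identity A(ζ·X)·B(X) = ζ^m·B(ζ·X)·A(X) holds, where A(ζ·X) denotes the composition of A with the polynomial ζ·X and ζ^m is the integer power. Then there exist polynomials P, Q ∈ ℂ[X] with Q ≠ 0 such that for every z ≠ 0 with B(z) ≠ 0 and Q(z^N) ≠ 0 one has A(z)/B(z) = z^m·P(z^N)/Q(z^N). -/

import Mathlib

open Polynomial

lemma comp_CX_coeff (p : Polynomial ℂ) (e : ℂ) (k : ℕ) :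
    (p.comp (C e * X)).coeff k = e ^ k * p.coeff k := by
  induction p using Polynomial.induction_on' with
  | add p q hp hq => simp [hp, hq, mul_add]
  | monomial n a =>
    rw [Polynomial.monomial_comp, mul_pow, ← Polynomial.C_pow, ← mul_assoc, ← Polynomial.C_mul]
    simp only [coeff_C_mul, coeff_X_pow, coeff_monomial]
    by_cases h : k = n
    · subst h; simp [mul_comm]
    · simp [h, Ne.symm h]

lemma semi_inv (p : Polynomial ℂ) (hp : p ≠ 0) (e : ℂ) (he : e ≠ 0)
    (hdvd : p ∣ p.comp (C e * X)) :
    ∃ c : ℂ, p.comp (C e * X) = C c * p ∧ ∀ k, e ^ k * p.coeff k = c * p.coeff k := by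
  obtain ⟨u, hu⟩ := hdvd
  have hcomp_ne : p.comp (C e * X) ≠ 0 := by
    intro h; apply hp; ext k
    have h2 := comp_CX_coeff p e k
    rw [h] at h2
    simpa [he] using h2.symm
  have hu_ne : u ≠ 0 := by rintro rfl; simp [hu] at hcomp_ne
  have hdeg : (p.comp (C e * X)).natDegree = p.natDegree := by
    rw [natDegree_comp, natDegree_C_mul_X e he, mul_one]
  have hu0 : u.natDegree = 0 := by
    have h3 := natDegree_mul hp hu_ne
    rw [← hu, hdeg] at h3
    omega
  obtain ⟨c, rfl⟩ : ∃ c, u = C c := ⟨u.coeff 0, (eq_C_of_natDegree_eq_zero hu0)⟩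
  refine ⟨c, by rw [hu, mul_comm], fun k => ?_⟩
  have h4 := comp_CX_coeff p e k
  rw [hu, coeff_mul_C] at h4
  rw [← h4]; ring

lemma eval_decomp (p : Polynomial ℂ) (N : ℕ) (r : ℕ)
    (hmod : ∀ k ∈ p.support, k % N = r) (z : ℂ) :
    p.eval z = z ^ r * (∑ k ∈ p.support, C (p.coeff k) * X ^ (k / N)).eval (z ^ N) := by
  rw [eval_finset_sum, Finset.mul_sum, Polynomial.eval_eq_sum, Polynomial.sum]
  apply Finset.sum_congr rfl
  intro k hk
  simp only [eval_mul, eval_C, eval_pow, eval_X]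
  rw [← pow_mul]
  have h1 : k % N + N * (k / N) = k := Nat.mod_add_div k N
  rw [hmod k hk] at h1
  have h2 : z ^ k = z ^ r * z ^ (N * (k / N)) := by rw [← pow_add, h1]
  rw [h2]; ring

lemma decomp_ne_zero (p : Polynomial ℂ) (hp : p ≠ 0) (N : ℕ) (r : ℕ)
    (hmod : ∀ k ∈ p.support, k % N = r) :
    (∑ k ∈ p.support, C (p.coeff k) * X ^ (k / N)) ≠ 0 := by
  obtain ⟨k0, hk0⟩ := (Polynomial.support_nonempty.mpr hp : p.support.Nonempty)
  intro h
  have hc : (∑ k ∈ p.support, C (p.coeff k) * X ^ (k / N)).coeff (k0 / N) = p.coeff k0 := by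
    rw [finset_sum_coeff, Finset.sum_eq_single k0]
    · simp [coeff_C_mul, coeff_X_pow]
    · intro k hk hne
      have hd : k / N ≠ k0 / N := by
        intro hdiv
        apply hne
        have h1 : k % N + N * (k / N) = k := Nat.mod_add_div k N
        have h2 : k0 % N + N * (k0 / N) = k0 := Nat.mod_add_div k0 N
        rw [hmod k hk, hdiv] at h1
        rw [hmod k0 hk0] at h2
        exact h1.symm.trans h2
      simp [coeff_C_mul, coeff_X_pow, Ne.symm hd]
    · intro h'; exact absurd hk0 h'
  rw [h] at hc
  simp only [coeff_zero] at hc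
  exact (mem_support_iff.mp hk0) hc.symm

theorem stmt_17 (N : ℕ) (hN : 1 ≤ N) (m : ℤ)
    (A B : Polynomial ℂ) (hA : A ≠ 0) (hB : B ≠ 0) (hcop : IsCoprime A B)
    (heq : ∀ ζ : ℂ, ζ ^ N = 1 →
      A.comp (Polynomial.C ζ * Polynomial.X) * B =
        Polynomial.C (ζ ^ m) * (B.comp (Polynomial.C ζ * Polynomial.X)) * A) :
    ∃ P Q : Polynomial ℂ, Q ≠ 0 ∧
      ∀ z : ℂ, z ≠ 0 → B.eval z ≠ 0 → Q.eval (z ^ N) ≠ 0 →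
        A.eval z / B.eval z = z ^ m * (P.eval (z ^ N) / Q.eval (z ^ N)) := by
  obtain ⟨e, he⟩ : ∃ e : ℂ, IsPrimitiveRoot e N :=
    ⟨_, Complex.isPrimitiveRoot_exp N (by omega)⟩
  have heN : e ^ N = 1 := he.pow_eq_one
  have he0 : e ≠ 0 := by
    intro h; rw [h, zero_pow (by omega : N ≠ 0)] at heN; exact zero_ne_one heN
  have hem0 : e ^ m ≠ 0 := zpow_ne_zero m he0
  have hkey := heq e heN
  have hAd : A ∣ A.comp (C e * X) := by
    apply hcop.dvd_of_dvd_mul_right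
    exact ⟨C (e ^ m) * B.comp (C e * X), by linear_combination hkey⟩
  have hBd : B ∣ B.comp (C e * X) := by
    have h1 : B ∣ C (e ^ m) * B.comp (C e * X) := by
      apply hcop.symm.dvd_of_dvd_mul_right (z := A)
      exact ⟨A.comp (C e * X), by linear_combination -hkey⟩
    have h2 := h1.mul_left (C (e ^ m)⁻¹)
    rwa [← mul_assoc, ← C_mul, inv_mul_cancel₀ hem0, C_1, one_mul] at h2
  obtain ⟨c, hcA, hcoA⟩ := semi_inv A hA e he0 hAd
  obtain ⟨d, hcB, hcoB⟩ := semi_inv B hB e he0 hBd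
  have hrel : c = e ^ m * d := by
    have h2 : C c * A * B = C (e ^ m) * (C d * B) * A := by rw [← hcA, ← hcB]; exact hkey
    have h3 : C c * (A * B) = C (e ^ m * d) * (A * B) := by
      rw [C_mul]; linear_combination h2
    have h4 := mul_right_cancel₀ (mul_ne_zero hA hB) h3
    exact C_injective h4
  obtain ⟨kA, hkA⟩ := (Polynomial.support_nonempty.mpr hA : A.support.Nonempty)
  obtain ⟨kB, hkB⟩ := (Polynomial.support_nonempty.mpr hB : B.support.Nonempty)
  have hekA : e ^ kA = c := mul_right_cancel₀ (mem_support_iff.mp hkA) (hcoA kA)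
  have hekB : e ^ kB = d := mul_right_cancel₀ (mem_support_iff.mp hkB) (hcoB kB)
  have hd0 : d ≠ 0 := hekB ▸ pow_ne_zero _ he0
  have hmodgen : ∀ (p : Polynomial ℂ) (cc : ℂ) (k0 : ℕ), e ^ k0 = cc →
      (∀ k, e ^ k * p.coeff k = cc * p.coeff k) →
      ∀ k ∈ p.support, k % N = k0 % N := by
    intro p cc k0 hk0 hco k hk
    have h1 : e ^ k = e ^ k0 := by
      rw [hk0]; exact mul_right_cancel₀ (mem_support_iff.mp hk) (hco k)
    have h2 : e ^ ((k : ℤ) - k0) = 1 := by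
      rw [zpow_sub₀ he0, zpow_natCast, zpow_natCast, h1, div_self (pow_ne_zero _ he0)]
    have h3 : (N:ℤ) ∣ (k:ℤ) - k0 := (he.zpow_eq_one_iff_dvd _).mp h2
    exact ((Nat.modEq_iff_dvd).mpr h3).symm
  have hAmod : ∀ k ∈ A.support, k % N = kA % N := hmodgen A c kA hekA hcoA
  have hBmod : ∀ k ∈ B.support, k % N = kB % N := hmodgen B d kB hekB hcoB
  set rA := kA % N with hrA
  set rB := kB % N with hrB
  set PA := ∑ k ∈ A.support, C (A.coeff k) * X ^ (k / N) with hPA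
  set PB := ∑ k ∈ B.support, C (B.coeff k) * X ^ (k / N) with hPBdef
  have hPB0 : PB ≠ 0 := decomp_ne_zero B hB N rB hBmod
  have hAev : ∀ z : ℂ, A.eval z = z ^ rA * PA.eval (z ^ N) := fun z => eval_decomp A N rA hAmod z
  have hBev : ∀ z : ℂ, B.eval z = z ^ rB * PB.eval (z ^ N) := fun z => eval_decomp B N rB hBmod z
  have hkrel : e ^ ((kA : ℤ) - kB - m) = 1 := by
    rw [zpow_sub₀ he0, zpow_sub₀ he0, zpow_natCast, zpow_natCast, hekA, hekB, hrel]
    field_simp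
  have hdvdm : (N : ℤ) ∣ (kA : ℤ) - kB - m := (he.zpow_eq_one_iff_dvd _).mp hkrel
  have hdvdA : (N : ℤ) ∣ (kA : ℤ) - rA := by
    refine ⟨((kA / N : ℕ) : ℤ), ?_⟩
    have h := Nat.mod_add_div kA N
    have h' : ((kA % N : ℕ) : ℤ) + N * ((kA / N : ℕ) : ℤ) = kA := by exact_mod_cast h
    rw [hrA]; linarith
  have hdvdB : (N : ℤ) ∣ (kB : ℤ) - rB := by
    refine ⟨((kB / N : ℕ) : ℤ), ?_⟩
    have h := Nat.mod_add_div kB N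
    have h' : ((kB % N : ℕ) : ℤ) + N * ((kB / N : ℕ) : ℤ) = kB := by exact_mod_cast h
    rw [hrB]; linarith
  have hdvd : (N : ℤ) ∣ (rA : ℤ) - rB - m := by
    have h9 := dvd_add (dvd_sub hdvdm hdvdA) hdvdB
    have h10 : (rA : ℤ) - rB - m = ((kA : ℤ) - kB - m) - ((kA : ℤ) - rA) + ((kB : ℤ) - rB) := by
      ring
    rw [h10]; exact h9
  obtain ⟨t, ht⟩ := hdvd
  rcases le_or_gt 0 t with htpos | htneg
  · refine ⟨X ^ t.toNat * PA, PB, hPB0, ?_⟩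
    intro z hz hBz hQz
    have hpow : ∀ s : ℕ, (z : ℂ) ^ ((N : ℤ) * (s : ℤ)) = (z ^ N) ^ s := by
      intro s
      rw [show ((N : ℤ) * (s : ℤ)) = ((N * s : ℕ) : ℤ) by push_cast; ring, zpow_natCast, pow_mul]
    rw [hAev z, hBev z]
    simp only [eval_mul, eval_pow, eval_X]
    have htn : ((t.toNat : ℤ)) = t := Int.toNat_of_nonneg htpos
    have key : (z : ℂ) ^ rA = z ^ m * (z ^ N) ^ t.toNat * z ^ rB := by
      have h7 : (rA : ℤ) = m + (N : ℤ) * t + (rB : ℤ) := by linarith [ht]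
      calc (z : ℂ) ^ rA = z ^ ((rA : ℕ) : ℤ) := (zpow_natCast z rA).symm
        _ = z ^ (m + (N : ℤ) * (t.toNat : ℤ) + (rB : ℤ)) := by rw [htn, ← h7]
        _ = z ^ m * z ^ ((N : ℤ) * (t.toNat : ℤ)) * z ^ ((rB : ℕ) : ℤ) := by
            rw [zpow_add₀ hz, zpow_add₀ hz]
        _ = z ^ m * (z ^ N) ^ t.toNat * z ^ rB := by rw [hpow, zpow_natCast]
    rw [key]
    have hzr : (z : ℂ) ^ rB ≠ 0 := pow_ne_zero _ hz
    field_simp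
  · refine ⟨PA, X ^ (-t).toNat * PB, mul_ne_zero (pow_ne_zero _ X_ne_zero) hPB0, ?_⟩
    intro z hz hBz hQz
    have hpow : ∀ s : ℕ, (z : ℂ) ^ ((N : ℤ) * (s : ℤ)) = (z ^ N) ^ s := by
      intro s
      rw [show ((N : ℤ) * (s : ℤ)) = ((N * s : ℕ) : ℤ) by push_cast; ring, zpow_natCast, pow_mul]
    simp only [eval_mul, eval_pow, eval_X] at hQz
    have hPBz : PB.eval (z ^ N) ≠ 0 := fun h => hQz (by rw [h, mul_zero])
    rw [hAev z, hBev z]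
    simp only [eval_mul, eval_pow, eval_X]
    have htn : (((-t).toNat : ℤ)) = -t := Int.toNat_of_nonneg (by omega)
    have key : (z : ℂ) ^ rA * (z ^ N) ^ (-t).toNat = z ^ m * z ^ rB := by
      have h7 : (rA : ℤ) + (N : ℤ) * ((-t).toNat : ℤ) = m + (rB : ℤ) := by
        rw [htn]; linarith [ht]
      calc (z : ℂ) ^ rA * (z ^ N) ^ (-t).toNat
          = z ^ ((rA : ℕ) : ℤ) * z ^ ((N : ℤ) * ((-t).toNat : ℤ)) := by
            rw [zpow_natCast, hpow]
        _ = z ^ ((rA : ℤ) + (N : ℤ) * ((-t).toNat : ℤ)) := (zpow_add₀ hz _ _).symm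
        _ = z ^ (m + (rB : ℤ)) := by rw [h7]
        _ = z ^ m * z ^ rB := by rw [zpow_add₀ hz, zpow_natCast]
    have hzr : (z : ℂ) ^ rB ≠ 0 := pow_ne_zero _ hz
    have hzs : ((z : ℂ) ^ N) ^ (-t).toNat ≠ 0 := pow_ne_zero _ (pow_ne_zero _ hz)
    field_simp
    rw [← pow_mul] at key
    linear_combination (PA.eval (z ^ N)) * key
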